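/- Let (Ω,ℱ) be a measurable space, 𝒳 a countable set with the discrete σ-algebra, X₀, X₁ : Ω → 𝒳 measurable, and P, R probability measures on Ω. Suppose supp P₀₁ ⊆ supp R₀₁ and P^{xy} = R^{xy} for every (x,y) ∈ supp P₀₁. Define k : 𝒳×𝒳 → [0,∞) by k(x,y) := P₀₁(x,y)/R₀₁(x,y) if R₀₁(x,y) > 0 and k(x,y) := 0 otherwise. Then P(A) = ∫_A k(X₀,X₁) dR for every A ∈ ℱ, and ∑_{(x,y)∈𝒳²} k(x,y)·R₀₁(x,y) = 1. -/

import Mathlib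

open MeasureTheory ProbabilityTheory
open scoped NNReal ENNReal

/-- If `supp P₀₁ ⊆ supp R₀₁` and the bridges coincide (`P^{xy} = R^{xy}` for
every `(x,y) ∈ supp P₀₁`), then with `k(x,y) := P₀₁(x,y)/R₀₁(x,y)` (set to `0` when
`R₀₁(x,y) = 0`) one has `P = k(X₀, X₁)·R`, and `∑_{(x,y)} k(x,y)·R₀₁(x,y) = 1`. -/
theorem stmt16 {Ω : Type*} [MeasurableSpace Ω] {𝒳 : Type*} [MeasurableSpace 𝒳]
    [MeasurableSingletonClass 𝒳] [Countable 𝒳]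
    (X₀ X₁ : Ω → 𝒳) (hX₀ : Measurable X₀) (hX₁ : Measurable X₁)
    (P R : Measure Ω) [IsProbabilityMeasure P] [IsProbabilityMeasure R]
    (hsupp : ∀ x y : 𝒳, 0 < P {ω | X₀ ω = x ∧ X₁ ω = y} →
      0 < R {ω | X₀ ω = x ∧ X₁ ω = y})
    (hbridge : ∀ x y : 𝒳, 0 < P {ω | X₀ ω = x ∧ X₁ ω = y} →
      ProbabilityTheory.cond P {ω | X₀ ω = x ∧ X₁ ω = y} =
        ProbabilityTheory.cond R {ω | X₀ ω = x ∧ X₁ ω = y})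
    (k : 𝒳 → 𝒳 → ℝ)
    (hk₁ : ∀ x y : 𝒳, 0 < R {ω | X₀ ω = x ∧ X₁ ω = y} →
      k x y = (P {ω | X₀ ω = x ∧ X₁ ω = y}).toReal /
        (R {ω | X₀ ω = x ∧ X₁ ω = y}).toReal)
    (hk₂ : ∀ x y : 𝒳, ¬ 0 < R {ω | X₀ ω = x ∧ X₁ ω = y} → k x y = 0) :
    (∀ A : Set Ω, MeasurableSet A →
      P A = lintegral (Measure.restrict R A) (fun ω => ENNReal.ofReal (k (X₀ ω) (X₁ ω)))) ∧
    ∑' p : 𝒳 × 𝒳, k p.1 p.2 * (R {ω | X₀ ω = p.1 ∧ X₁ ω = p.2}).toReal = 1 := by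
  classical
  set E : 𝒳 × 𝒳 → Set Ω := fun p => {ω | X₀ ω = p.1 ∧ X₁ ω = p.2} with hE
  have hEmeas : ∀ p, MeasurableSet (E p) := by
    intro p
    have : E p = X₀ ⁻¹' {p.1} ∩ X₁ ⁻¹' {p.2} := by
      ext ω; simp [hE, Set.mem_preimage]
    rw [this]
    exact (hX₀ (measurableSet_singleton _)).inter (hX₁ (measurableSet_singleton _))
  have hdisj : Pairwise (Function.onFun Disjoint E) := by
    intro p q hpq
    rw [Function.onFun, Set.disjoint_left]
    rintro ω ⟨h1, h2⟩ ⟨h3, h4⟩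
    exact hpq (by cases p; cases q; simp_all)
  have hcover : ⋃ p, E p = Set.univ := by
    ext ω; simp only [Set.mem_iUnion, Set.mem_univ, iff_true]
    exact ⟨(X₀ ω, X₁ ω), rfl, rfl⟩
  -- P vanishes on R-null pieces
  have hPzero : ∀ p : 𝒳 × 𝒳, ¬ 0 < R (E p) → P (E p) = 0 := by
    intro p h
    by_contra hP
    exact h (hsupp p.1 p.2 (pos_iff_ne_zero.mpr hP))
  -- key identity
  have key : ∀ (p : 𝒳 × 𝒳) (A : Set Ω), MeasurableSet A →
      P (A ∩ E p) = ENNReal.ofReal (k p.1 p.2) * R (A ∩ E p) := by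
    intro p A hA
    by_cases hR : 0 < R (E p)
    · have hRne : R (E p) ≠ 0 := hR.ne'
      have hRfin : R (E p) ≠ ∞ := measure_ne_top R _
      have hPfin : P (E p) ≠ ∞ := measure_ne_top P _
      have hkof : ENNReal.ofReal (k p.1 p.2) = P (E p) / R (E p) := by
        rw [hk₁ p.1 p.2 hR, ENNReal.ofReal_div_of_pos (ENNReal.toReal_pos hRne hRfin),
          ENNReal.ofReal_toReal hPfin, ENNReal.ofReal_toReal hRfin]
      by_cases hP : 0 < P (E p)
      · have hPne : P (E p) ≠ 0 := hP.ne'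
        have hb : ProbabilityTheory.cond P (E p) = ProbabilityTheory.cond R (E p) := hbridge p.1 p.2 hP
        have h1 := congrArg (fun μ : Measure Ω => μ A) hb
        simp only [ProbabilityTheory.cond_apply (hEmeas p)] at h1
        -- h1 : (P (E p))⁻¹ * P (E p ∩ A) = (R (E p))⁻¹ * R (E p ∩ A)
        have h2 : P (E p ∩ A) = P (E p) * ((R (E p))⁻¹ * R (E p ∩ A)) := by
          rw [← h1, ← mul_assoc, ENNReal.mul_inv_cancel hPne hPfin, one_mul]
        rw [Set.inter_comm A (E p), h2, hkof, ENNReal.div_eq_inv_mul]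
        ring
      · have hP0 : P (E p) = 0 := by
          by_contra h; exact hP (pos_iff_ne_zero.mpr h)
        have : P (A ∩ E p) = 0 :=
          measure_mono_null Set.inter_subset_right hP0
        rw [this, hkof, hP0, ENNReal.zero_div, zero_mul]
    · have hR0 : R (E p) = 0 := by
        by_contra h; exact hR (pos_iff_ne_zero.mpr h)
      have hP0 : P (E p) = 0 := hPzero p hR
      rw [measure_mono_null Set.inter_subset_right hP0,
        measure_mono_null Set.inter_subset_right hR0, mul_zero]
  constructor
  · intro A hA
    have hA1 : A = ⋃ p, A ∩ E p := by
      rw [← Set.inter_iUnion, hcover, Set.inter_univ]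
    have hdisj' : Pairwise (Function.onFun Disjoint (fun p => A ∩ E p)) :=
      hdisj.mono fun p q h => h.mono Set.inter_subset_right Set.inter_subset_right
    have hmeas' : ∀ p, MeasurableSet (A ∩ E p) := fun p => hA.inter (hEmeas p)
    calc P A = P (⋃ p, A ∩ E p) := by rw [← hA1]
      _ = ∑' p, P (A ∩ E p) := measure_iUnion hdisj' hmeas'
      _ = ∑' p, ENNReal.ofReal (k p.1 p.2) * R (A ∩ E p) := by
          exact tsum_congr fun p => key p A hA
      _ = ∑' p, ∫⁻ ω in A ∩ E p, ENNReal.ofReal (k (X₀ ω) (X₁ ω)) ∂ R := by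
          refine tsum_congr fun p => ?_
          have hc : ∀ᵐ ω ∂ R, ω ∈ A ∩ E p →
              ENNReal.ofReal (k (X₀ ω) (X₁ ω)) = ENNReal.ofReal (k p.1 p.2) :=
            ae_of_all _ fun ω hω => by obtain ⟨-, h1, h2⟩ := hω; rw [h1, h2]
          rw [setLIntegral_congr_fun_ae (hmeas' p) hc, setLIntegral_const, mul_comm]
      _ = ∫⁻ ω in ⋃ p, A ∩ E p, ENNReal.ofReal (k (X₀ ω) (X₁ ω)) ∂ R := by
          rw [lintegral_iUnion hmeas' hdisj']
      _ = ∫⁻ ω in A, ENNReal.ofReal (k (X₀ ω) (X₁ ω)) ∂ R := by rw [← hA1]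
  · have hterm : ∀ p : 𝒳 × 𝒳, k p.1 p.2 * (R (E p)).toReal = (P (E p)).toReal := by
      intro p
      by_cases hR : 0 < R (E p)
      · rw [hk₁ p.1 p.2 hR, div_mul_cancel₀]
        exact (ENNReal.toReal_pos hR.ne' (measure_ne_top R _)).ne'
      · rw [hk₂ p.1 p.2 hR, zero_mul, hPzero p hR, ENNReal.toReal_zero]
    calc ∑' p : 𝒳 × 𝒳, k p.1 p.2 * (R (E p)).toReal
        = ∑' p, (P (E p)).toReal := tsum_congr hterm
      _ = (∑' p, P (E p)).toReal := (ENNReal.tsum_toReal_eq fun p => measure_ne_top P _).symm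
      _ = 1 := by
          rw [← measure_iUnion hdisj hEmeas, hcover, measure_univ, ENNReal.toReal_one]
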